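/- Let R be a commutative ring and A a graded R-algebra (with grading 𝒜 and 𝒜 0 equal to the image of R). If A is a finitely presented R-algebra, then there exists an integer t ≥ 1 such that A is a t-pgg algebra. -/
import Mathlib


/-!
Partially generated graded algebras (pgg).

A graded `R`-algebra `A` (grading `𝒜 : ℕ → Submodule R A`) is `t`-pgg if the evaluation
map from the (weighted) polynomial ring on variables `X_(i,a)` (`1 ≤ i ≤ t`, `a ∈ 𝒜 i`,
`X_(i,a)` of weight `i`) sending `X_(i,a) ↦ a` is surjective and its kernel is generated
by weighted-homogeneous polynomials of weighted degree at most `t`.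
-/

open MvPolynomial

/-- The variables `X_(i,a)` for `1 ≤ i ≤ t` and `a ∈ 𝒜 i`. -/
abbrev PggVars {R A : Type*} [CommRing R] [CommRing A] [Algebra R A]
    (𝒜 : ℕ → Submodule R A) (t : ℕ) : Type _ :=
  Σ i : Set.Icc 1 t, 𝒜 (i : ℕ)

/-- The weight of the variable `X_(i,a)` is `i`. -/
def pggWeight {R A : Type*} [CommRing R] [CommRing A] [Algebra R A]
    (𝒜 : ℕ → Submodule R A) (t : ℕ) : PggVars 𝒜 t → ℕ :=
  fun v => (v.1 : ℕ)

/-- The evaluation homomorphism `ev_t`, sending `X_(i,a)` to `a`. -/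
noncomputable def pggEval {R A : Type*} [CommRing R] [CommRing A] [Algebra R A]
    (𝒜 : ℕ → Submodule R A) (t : ℕ) :
    MvPolynomial (PggVars 𝒜 t) R →ₐ[R] A :=
  aeval fun v => (v.2 : A)

/-- `A` is a `t`-partially generated graded (`t`-pgg) `R`-algebra: `ev_t` is surjective and
its kernel is generated by weighted-homogeneous polynomials of weighted degree at most `t`. -/
def IsPgg {R A : Type*} [CommRing R] [CommRing A] [Algebra R A]
    (𝒜 : ℕ → Submodule R A) (t : ℕ) : Prop :=
  Function.Surjective (pggEval 𝒜 t) ∧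
  ∃ S : Set (MvPolynomial (PggVars 𝒜 t) R),
    (∀ p ∈ S, ∃ n ≤ t, p.IsWeightedHomogeneous (pggWeight 𝒜 t) n) ∧
    RingHom.ker (pggEval 𝒜 t) = Ideal.span S


section Aux

variable {R A : Type*} [CommRing R] [CommRing A] [Algebra R A]

/-- Renaming along a weight-compatible map preserves weighted homogeneity. -/
lemma aux_rename_homog {σ τ : Type*} {w : σ → ℕ} {w' : τ → ℕ} (f : σ → τ)
    (hw : ∀ i, w' (f i) = w i) {p : MvPolynomial σ R} {n : ℕ}
    (hp : p.IsWeightedHomogeneous w n) :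
    (rename f p).IsWeightedHomogeneous w' n := by
  intro d hd
  obtain ⟨u, hu, hu'⟩ := coeff_rename_ne_zero f p d hd
  have hweight := hp hu'
  subst hu
  rw [Finsupp.weight_apply] at hweight ⊢
  have heq : ((Finsupp.mapDomain f u).sum fun i c => c • w' i)
      = u.sum fun i c => c • w' (f i) :=
    Finsupp.sum_mapDomain_index (fun b => zero_smul ℕ _)
      (fun b c₁ c₂ => add_smul c₁ c₂ _)
  rw [heq]
  simpa only [hw] using hweight

variable (𝒜 : ℕ → Submodule R A) [GradedAlgebra 𝒜]

/-- Evaluating a weighted-homogeneous polynomial at graded elements lands in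
the corresponding graded piece. -/
lemma aux_aeval_mem {σ : Type*} (w : σ → ℕ) (a : σ → A) (ha : ∀ i, a i ∈ 𝒜 (w i))
    {p : MvPolynomial σ R} {n : ℕ} (hp : p.IsWeightedHomogeneous w n) :
    aeval a p ∈ 𝒜 n := by
  rw [aeval_def, eval₂_eq]
  apply Submodule.sum_mem
  intro d hd
  have hwd := hp (mem_support_iff.mp hd)
  rw [← Algebra.smul_def]
  apply Submodule.smul_mem
  rw [← hwd, Finsupp.weight_apply, Finsupp.sum]
  exact SetLike.prod_pow_mem_graded 𝒜 w (a ·) d (fun k _ => ha k)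

lemma aux_decompose_sum {s : Finset ℕ} {v : ℕ → A} (hv : ∀ d ∈ s, v d ∈ 𝒜 d)
    {i : ℕ} (hi : i ∈ s) :
    (DirectSum.decompose 𝒜 (∑ d ∈ s, v d) i : A) = v i := by
  classical
  rw [DirectSum.decompose_sum]
  rw [DFinsupp.finset_sum_apply, Submodule.coe_sum]
  rw [Finset.sum_eq_single_of_mem i hi]
  · exact DirectSum.decompose_of_mem_same 𝒜 (hv i hi)
  · intro d hd hdi
    exact DirectSum.decompose_of_mem_ne 𝒜 (hv d hd) hdi

lemma aux_sum_comp {σ : Type*} (w : σ → ℕ) (p : MvPolynomial σ R) (s : Finset ℕ)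
    (hs : Finset.range (weightedTotalDegree w p + 1) ⊆ s) :
    ∑ d ∈ s, weightedHomogeneousComponent w d p = p := by
  conv_rhs => rw [← sum_weightedHomogeneousComponent w p]
  symm
  apply finsum_eq_finset_sum_of_support_subset
  intro m hm
  simp only [Function.mem_support] at hm
  apply hs
  rw [Finset.mem_range, Nat.lt_add_one_iff]
  by_contra h
  exact hm (weightedHomogeneousComponent_eq_zero m p (lt_of_not_ge h))

/-- If `aeval a p = c ∈ 𝒜 i`, then already the degree-`i` weighted component of `p`
evaluates to `c`. -/
lemma aux_comp_eval {σ : Type*} (w : σ → ℕ) (a : σ → A) (ha : ∀ j, a j ∈ 𝒜 (w j))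
    {p : MvPolynomial σ R} {c : A} {i : ℕ} (hc : c ∈ 𝒜 i) (hp : aeval a p = c) :
    aeval a (weightedHomogeneousComponent w i p) = c := by
  classical
  set s : Finset ℕ := Finset.range (weightedTotalDegree w p + 1) ∪ {i} with hs
  have hi : i ∈ s := Finset.mem_union_right _ (Finset.mem_singleton_self i)
  have hsum : ∑ d ∈ s, weightedHomogeneousComponent w d p = p :=
    aux_sum_comp w p s Finset.subset_union_left
  have hc2 : c = ∑ d ∈ s, aeval a (weightedHomogeneousComponent w d p) := by
    rw [← map_sum, hsum, hp]
  have := aux_decompose_sum 𝒜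
    (v := fun d => aeval a (weightedHomogeneousComponent w d p))
    (fun d _ => aux_aeval_mem 𝒜 w a ha
      (weightedHomogeneousComponent_isWeightedHomogeneous d p)) hi
  rw [← hc2, DirectSum.decompose_of_mem_same 𝒜 hc] at this
  exact this.symm

end Aux

/-- **Proposition 5.8**: a finitely presented graded `R`-algebra is `t`-pgg for some `t ≥ 1`. -/
theorem stmt7 {R A : Type*} [CommRing R] [CommRing A] [Algebra R A]
    (𝒜 : ℕ → Submodule R A) [GradedAlgebra 𝒜]
    (h0 : 𝒜 0 = LinearMap.range (Algebra.linearMap R A))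
    (hfp : Algebra.FinitePresentation R A) :
    ∃ t : ℕ, 1 ≤ t ∧ IsPgg 𝒜 t := by
  classical
  haveI := hfp
  have h0' : ∀ y : A, y ∈ 𝒜 0 → ∃ r : R, algebraMap R A r = y := by
    intro y hy
    rw [h0] at hy
    exact hy
  -- a finite generating set
  obtain ⟨T, hT⟩ := (inferInstance : Algebra.FiniteType R A).out
  -- bound on degrees of components of the generators
  set N : ℕ := (T.sup fun x => (DirectSum.decompose 𝒜 x).support.sup id) + 1 with hN
  -- homogeneous generators
  set σ₀ : Type _ := ↥T × Fin N with hσ₀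
  set d : σ₀ → ℕ := fun v => (v.2 : ℕ) + 1 with hd
  set a : σ₀ → A := fun v => (DirectSum.decompose 𝒜 (v.1 : A) ((v.2 : ℕ) + 1) : A) with ha
  have hamem : ∀ v, a v ∈ 𝒜 (d v) := fun v => SetLike.coe_mem _
  set ψ : MvPolynomial σ₀ R →ₐ[R] A := MvPolynomial.aeval a with hψdef
  -- surjectivity of ψ
  have hadjoin : Algebra.adjoin R (Set.range a) = ⊤ := by
    rw [eq_top_iff, ← hT]
    rw [Algebra.adjoin_le_iff]
    intro x hx
    have hdec : ∑ i ∈ Finset.range (N + 1), (DirectSum.decompose 𝒜 x i : A) = x := by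
      have h2 : ∑ i ∈ (DirectSum.decompose 𝒜 x).support, (DirectSum.decompose 𝒜 x i : A)
          = ∑ i ∈ Finset.range (N + 1), (DirectSum.decompose 𝒜 x i : A) := by
        apply Finset.sum_subset
        · intro i hi
          rw [Finset.mem_range]
          have h3 : i ≤ T.sup fun y => (DirectSum.decompose 𝒜 y).support.sup id :=
            le_trans (Finset.le_sup (f := id) hi)
              (Finset.le_sup (f := fun y => (DirectSum.decompose 𝒜 y).support.sup id) hx)
          have h4 : N = (T.sup fun y => (DirectSum.decompose 𝒜 y).support.sup id) + 1 := hN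
          omega
        · intro i _ hi
          rw [DFinsupp.notMem_support_iff.mp hi, Submodule.coe_zero]
      rw [← h2, DirectSum.sum_support_decompose 𝒜 x]
    rw [← hdec]
    apply Subalgebra.sum_mem
    intro i hi
    rcases Nat.eq_zero_or_pos i with h | h
    · subst h
      obtain ⟨r, hr⟩ := h0' _ (SetLike.coe_mem (DirectSum.decompose 𝒜 x 0))
      exact hr ▸ Subalgebra.algebraMap_mem _ r
    · have hiN : i < N + 1 := Finset.mem_range.mp hi
      have hi' : i - 1 < N := by omega
      apply Algebra.subset_adjoin
      refine ⟨⟨⟨x, hx⟩, ⟨i - 1, hi'⟩⟩, ?_⟩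
      show (DirectSum.decompose 𝒜 x ((i - 1) + 1) : A) = (DirectSum.decompose 𝒜 x i : A)
      have hidx : i - 1 + 1 = i := by omega
      rw [hidx]
  have hψ : Function.Surjective ψ := by
    have hrange : (MvPolynomial.aeval (R := R) a).range = ⊤ := by
      rw [← Algebra.adjoin_range_eq_range_aeval, hadjoin]
    intro b
    have hb : b ∈ (MvPolynomial.aeval (R := R) a).range := hrange ▸ Algebra.mem_top
    exact hb
  -- the kernel of ψ is finitely generated
  set e := Fintype.equivFin σ₀ with he
  set ψ' : MvPolynomial (Fin (Fintype.card σ₀)) R →ₐ[R] A :=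
    MvPolynomial.aeval (a ∘ e.symm) with hψ'def
  have hψ'eq : ∀ q, ψ' q = ψ (rename ⇑e.symm q) := by
    intro q
    rw [hψdef, aeval_rename]
  have hψ'surj : Function.Surjective ψ' := by
    intro b
    obtain ⟨p, hp⟩ := hψ b
    refine ⟨rename (⇑e) p, ?_⟩
    rw [hψ'eq, rename_rename]
    simpa using congrArg ψ (by simp : rename (⇑e.symm ∘ ⇑e) p = p) ▸ hp
  have hkerfg : (RingHom.ker ψ'.toRingHom).FG :=
    Algebra.FinitePresentation.ker_fg_of_mvPolynomial ψ' hψ'surj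
  obtain ⟨F, hF⟩ := hkerfg
  -- transfer generators along the renaming
  set F₀ : Finset (MvPolynomial σ₀ R) := F.image (rename ⇑e.symm) with hF₀def
  have hkerψ' : RingHom.ker ψ'.toRingHom = Ideal.comap (rename (R := R) ⇑e.symm)
      (RingHom.ker ψ.toRingHom) := by
    ext q
    simp only [RingHom.mem_ker, Ideal.mem_comap, AlgHom.toRingHom_eq_coe,
      RingHom.coe_coe, hψ'eq q]
  have hrensurj : Function.Surjective (rename (R := R) ⇑e.symm) :=
    fun p => ⟨rename (⇑e) p, by rw [rename_rename]; simp⟩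
  have hF₀ : Ideal.span (↑F₀ : Set (MvPolynomial σ₀ R)) = RingHom.ker ψ.toRingHom := by
    rw [hF₀def, Finset.coe_image, ← Ideal.map_span, hF, hkerψ',
      Ideal.map_comap_of_surjective _ hrensurj]
  -- the degree bound for the relations
  set E : ℕ := F₀.sup (fun f => weightedTotalDegree d f) with hE
  set t : ℕ := max (max N E) 1 with ht
  have hNt : N ≤ t := le_trans (le_max_left _ _) (le_max_left _ _)
  have hEt : E ≤ t := le_trans (le_max_right _ _) (le_max_left _ _)
  -- the variable inclusion
  have hdmem : ∀ v : σ₀, d v ∈ Set.Icc 1 t := by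
    intro v
    have hvN : (v.2 : ℕ) < N := v.2.2
    refine Set.mem_Icc.mpr ⟨Nat.le_add_left 1 _, ?_⟩
    show (v.2 : ℕ) + 1 ≤ t
    omega
  set ι : σ₀ → PggVars 𝒜 t := fun v => ⟨⟨d v, hdmem v⟩, ⟨a v, hamem v⟩⟩ with hι
  have hwι : ∀ v, pggWeight 𝒜 t (ι v) = d v := fun v => rfl
  have hev_rename : ∀ g : MvPolynomial σ₀ R, pggEval 𝒜 t (rename ι g) = ψ g := by
    intro g
    rw [pggEval, aeval_rename]
    rfl
  have hevX : ∀ v : PggVars 𝒜 t, pggEval 𝒜 t (X v) = (v.2 : A) := by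
    intro v
    rw [pggEval, aeval_X]
  -- surjectivity
  have hsurj : Function.Surjective (pggEval 𝒜 t) := by
    intro b
    obtain ⟨g, hg⟩ := hψ b
    exact ⟨rename ι g, by rw [hev_rename, hg]⟩
  -- the homogeneous lifts of elements of the graded pieces
  have hQex : ∀ v : PggVars 𝒜 t, ∃ q : MvPolynomial σ₀ R,
      q.IsWeightedHomogeneous d (v.1 : ℕ) ∧ ψ q = (v.2 : A) := by
    intro v
    obtain ⟨p, hp⟩ := hψ (v.2 : A)
    exact ⟨weightedHomogeneousComponent d (v.1 : ℕ) p,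
      weightedHomogeneousComponent_isWeightedHomogeneous _ _,
      aux_comp_eval 𝒜 d a hamem (SetLike.coe_mem v.2) hp⟩
  choose Q hQhom hQeval using hQex
  -- the generating set of the kernel
  set S : Set (MvPolynomial (PggVars 𝒜 t) R) :=
    (Set.image2 (fun f m => rename ι (weightedHomogeneousComponent d m f))
        (↑F₀ : Set (MvPolynomial σ₀ R)) (Set.Iic E)) ∪
      Set.range (fun v : PggVars 𝒜 t => X v - rename ι (Q v)) with hS
  refine ⟨t, le_max_right _ _, hsurj, S, ?_, ?_⟩
  · -- homogeneity of the generators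
    rintro p (hp | hp)
    · obtain ⟨f, hf, m, hm, rfl⟩ := hp
      exact ⟨m, le_trans hm hEt,
        aux_rename_homog ι hwι (weightedHomogeneousComponent_isWeightedHomogeneous m f)⟩
    · obtain ⟨v, rfl⟩ := hp
      refine ⟨(v.1 : ℕ), v.1.2.2, ?_⟩
      rw [← mem_weightedHomogeneousSubmodule]
      apply Submodule.sub_mem
      · exact isWeightedHomogeneous_X R (pggWeight 𝒜 t) v
      · exact aux_rename_homog ι hwι (hQhom v)
  · -- the kernel is spanned by S
    have hSker : Ideal.span S ≤ RingHom.ker (pggEval 𝒜 t) := by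
      rw [Ideal.span_le]
      rintro p (hp | hp)
      · obtain ⟨f, hf, m, hm, rfl⟩ := hp
        simp only [SetLike.mem_coe, RingHom.mem_ker]
        rw [hev_rename]
        have hfker : ψ f = 0 := by
          have hmem : f ∈ Ideal.span (↑F₀ : Set (MvPolynomial σ₀ R)) := Ideal.subset_span hf
          rw [hF₀] at hmem
          exact RingHom.mem_ker.mp hmem
        exact aux_comp_eval 𝒜 d a hamem (Submodule.zero_mem (𝒜 m)) hfker
      · obtain ⟨v, rfl⟩ := hp
        simp only [SetLike.mem_coe, RingHom.mem_ker]
        rw [map_sub, hev_rename, hQeval, hevX, sub_self]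
    -- reduction to the distinguished variables
    have hred : ∀ p : MvPolynomial (PggVars 𝒜 t) R,
        ∃ g : MvPolynomial σ₀ R, p - rename ι g ∈ Ideal.span S := by
      intro p
      induction p using MvPolynomial.induction_on with
      | C r => exact ⟨C r, by rw [rename_C, sub_self]; exact Ideal.zero_mem _⟩
      | add p q hp hq =>
        obtain ⟨g, hg⟩ := hp
        obtain ⟨g', hg'⟩ := hq
        refine ⟨g + g', ?_⟩
        have heq : p + q - rename ι (g + g') = (p - rename ι g) + (q - rename ι g') := by
          rw [map_add]; ring
        rw [heq]
        exact Ideal.add_mem _ hg hg'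
      | mul_X p v hp =>
        obtain ⟨g, hg⟩ := hp
        refine ⟨g * Q v, ?_⟩
        have heq : p * X v - rename ι (g * Q v) =
            (p - rename ι g) * X v + rename ι g * (X v - rename ι (Q v)) := by
          rw [map_mul]; ring
        rw [heq]
        refine Ideal.add_mem _ (Ideal.mul_mem_right _ _ hg) (Ideal.mul_mem_left _ _ ?_)
        exact Ideal.subset_span (Set.mem_union_right _ ⟨v, rfl⟩)
    -- the images of the small relations lie in the span
    have hFspan : ∀ f ∈ F₀, rename ι f ∈ Ideal.span S := by
      intro f hf
      have hle : weightedTotalDegree d f ≤ E := Finset.le_sup (f := fun f => weightedTotalDegree d f) hf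
      have hdeg : Finset.range (weightedTotalDegree d f + 1) ⊆ Finset.range (E + 1) :=
        Finset.range_subset_range.mpr (by omega)
      rw [← aux_sum_comp (R := R) d f (Finset.range (E + 1)) hdeg, map_sum]
      apply Ideal.sum_mem
      intro m hm
      refine Ideal.subset_span (Set.mem_union_left _ ?_)
      exact Set.mem_image2_of_mem hf (Set.mem_Iic.mpr (Nat.lt_add_one_iff.mp (Finset.mem_range.mp hm)))
    refine le_antisymm ?_ hSker
    intro p hp
    obtain ⟨g, hg⟩ := hred p
    have hpg : pggEval 𝒜 t (rename ι g) = 0 := by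
      have h1 : pggEval 𝒜 t (p - rename ι g) = 0 := RingHom.mem_ker.mp (hSker hg)
      have h2 : pggEval 𝒜 t p = 0 := RingHom.mem_ker.mp hp
      rw [map_sub, h2, zero_sub, neg_eq_zero] at h1
      exact h1
    have hgker : g ∈ Ideal.span (↑F₀ : Set (MvPolynomial σ₀ R)) := by
      rw [hF₀]
      rw [hev_rename] at hpg
      exact RingHom.mem_ker.mpr hpg
    have hmap : rename ι g ∈ Ideal.map (rename (R := R) ι) (Ideal.span (↑F₀ : Set (MvPolynomial σ₀ R))) :=
      Ideal.mem_map_of_mem _ hgker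
    rw [Ideal.map_span] at hmap
    have himle : Ideal.span ((rename (R := R) ι) '' (↑F₀ : Set (MvPolynomial σ₀ R))) ≤ Ideal.span S := by
      rw [Ideal.span_le]
      rintro _ ⟨f, hf, rfl⟩
      exact hFspan f hf
    have hmem2 : rename ι g ∈ Ideal.span S := himle hmap
    have heq : p = (p - rename ι g) + rename ι g := by ring
    rw [heq]
    exact Ideal.add_mem _ hg hmem2
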